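/- Consider a coordination game on a simple directed cycle 1 → 2 → ... → n → 1 with n ≥ 3 nodes, where all nodes have at least the two colours a and b available. Then this game does not have the finite improvement property: there exists an infinite improvement path (a sequence of joint strategies where each successive one is a profitable unilateral deviation of a single player). -/

import Mathlib

open Finset

/-- Payoff in a coordination game with bonuses on the simple directed cycle
`1 → 2 → ⋯ → n → 1` (nodes modelled as `Fin n`, with `i - 1` the predecessor
of `i` on the cycle): the bonus of `i` for its colour, plus `1` if `i` chose
the same colour as its predecessor. -/
def cycPayoff {n : ℕ} [NeZero n] {C : Type} [DecidableEq C]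
    (β : Fin n → C → ℕ) (s : Fin n → C) (i : Fin n) : ℕ :=
  β i (s i) + (if s (i - 1) = s i then 1 else 0)

/-- A colouring is valid if every node chooses a colour available to it. -/
def Valid {n : ℕ} {C : Type} (A : Fin n → Finset C) (s : Fin n → C) : Prop :=
  ∀ i, s i ∈ A i

/-- `s'` is a profitable deviation (of the non-empty coalition on which `s`
and `s'` differ) from `s`: every deviating player strictly improves. -/
def ProfDev {n : ℕ} {C : Type} (p : (Fin n → C) → Fin n → ℕ)
    (s s' : Fin n → C) : Prop :=
  s ≠ s' ∧ ∀ i, s i ≠ s' i → p s i < p s' i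

/-- A strong equilibrium: no coalition has a profitable deviation. -/
def StrongEq {n : ℕ} {C : Type} (A : Fin n → Finset C)
    (p : (Fin n → C) → Fin n → ℕ) (s : Fin n → C) : Prop :=
  ∀ s', Valid A s' → ¬ ProfDev p s s'

/-- A Nash equilibrium: no single player can strictly improve unilaterally. -/
def NashEq {n : ℕ} {C : Type} [DecidableEq C] (A : Fin n → Finset C)
    (p : (Fin n → C) → Fin n → ℕ) (s : Fin n → C) : Prop :=
  ∀ i, ∀ c ∈ A i, p (Function.update s i c) i ≤ p s i

/-- A single-player profitable deviation: exactly player `i` changes his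
strategy and strictly improves. -/
def SingleStep {n : ℕ} {C : Type} (p : (Fin n → C) → Fin n → ℕ)
    (s s' : Fin n → C) : Prop :=
  ∃ i, (∀ j, j ≠ i → s j = s' j) ∧ s i ≠ s' i ∧ p s i < p s' i

open Fin.NatCast in
/-- A coordination game on a simple directed cycle with `n ≥ 3` nodes in which
all nodes have the two colours `a ≠ b` available does not have the finite
improvement property: there is an infinite improvement path, i.e. an infinite
sequence of valid colourings in which each successive colouring is a
profitable unilateral deviation of a single player. (Bonuses are zero, so the
payoff of a node is `1` if it matches its predecessor's colour, else `0`.) -/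
theorem cycle_no_FIP {n : ℕ} [NeZero n] (hn : 3 ≤ n)
    {C : Type} [DecidableEq C] (a b : C) (hab : a ≠ b)
    (A : Fin n → Finset C) (ha : ∀ i, a ∈ A i) (hb : ∀ i, b ∈ A i) :
    ∃ f : ℕ → (Fin n → C),
      (∀ k, Valid A (f k)) ∧
      ∀ k, SingleStep (cycPayoff (fun _ _ => 0)) (f k) (f (k + 1)) := by
  have hone : (1 : Fin n) ≠ 0 := by
    intro h
    have := congrArg Fin.val h
    rw [Fin.val_one' n, Fin.val_zero, Nat.mod_eq_of_lt (by omega)] at this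
    omega
  have htwo : (1 + 1 : Fin n) ≠ 0 := by
    intro h
    have := congrArg Fin.val h
    rw [Fin.val_add, Fin.val_one' n, Fin.val_zero,
      Nat.mod_eq_of_lt (show 1 < n by omega),
      Nat.mod_eq_of_lt (show 1 + 1 < n by omega)] at this
    omega
  have hne1 : ∀ x : Fin n, x + 1 ≠ x := by
    intro x h
    exact hone (by rwa [add_eq_left] at h)
  have hsub : ∀ x : Fin n, x - 1 ≠ x := by
    intro x h
    rw [sub_eq_iff_eq_add] at h
    exact hne1 x h.symm
  have hsub2 : ∀ x : Fin n, x - 1 ≠ x + 1 := by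
    intro x h
    rw [sub_eq_iff_eq_add, add_assoc] at h
    exact htwo (add_left_cancel (a := x) (by rw [add_zero]; exact h)).symm
  refine ⟨fun m i =>
      if i = (((m + 1) / 2 : ℕ) : Fin n) ∨ (m % 2 = 1 ∧ i = ((m / 2 : ℕ) : Fin n))
      then b else a, ?_, ?_⟩
  · intro m i
    dsimp only
    split
    · exact hb i
    · exact ha i
  · intro m
    rcases Nat.even_or_odd m with ⟨k, hk⟩ | ⟨k, hk⟩
    · -- m = k + k : single b at ↑k; node ↑k+1 switches a → b
      subst hk
      have e1 : (k + k + 1) / 2 = k := by omega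
      have e2 : (k + k) % 2 = 0 := by omega
      have e3 : (k + k + 1 + 1) / 2 = k + 1 := by omega
      have e4 : (k + k + 1) % 2 = 1 := by omega
      have e5 : (k + k + 1) / 2 = k := by omega
      refine ⟨(k : Fin n) + 1, ?_, ?_, ?_⟩
      · intro j hj
        simp only [e1, e2, e3, e4, e5, Nat.cast_add, Nat.cast_one]
        by_cases h : j = (k : Fin n) <;> simp [h, hj]
      · simp only [e1, e2, e3, e4, e5, Nat.cast_add, Nat.cast_one]
        simp [hne1, hab]
      · simp only [cycPayoff, e1, e2, e3, e4, e5, Nat.cast_add, Nat.cast_one,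
          add_sub_cancel_right]
        simp [hne1, hab, Ne.symm hab]
    · -- m = 2k + 1 : b at ↑k, ↑k+1; node ↑k switches b → a
      subst hk
      have e1 : (2 * k + 1 + 1) / 2 = k + 1 := by omega
      have e2 : (2 * k + 1) % 2 = 1 := by omega
      have e3 : (2 * k + 1) / 2 = k := by omega
      have e4 : (2 * k + 1 + 1 + 1) / 2 = k + 1 := by omega
      have e5 : (2 * k + 1 + 1) % 2 = 0 := by omega
      refine ⟨(k : Fin n), ?_, ?_, ?_⟩
      · intro j hj
        simp only [e1, e2, e3, e4, e5, Nat.cast_add, Nat.cast_one]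
        by_cases h : j = (k : Fin n) + 1 <;> simp [h, hj]
      · simp only [e1, e2, e3, e4, e5, Nat.cast_add, Nat.cast_one]
        simp [Ne.symm (hne1 (k : Fin n)), hab, Ne.symm hab]
      · simp only [cycPayoff, e1, e2, e3, e4, e5, Nat.cast_add, Nat.cast_one]
        simp [hsub, hsub2, Ne.symm (hne1 (k : Fin n)), hab, Ne.symm hab]
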